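/- For fixed y ∈ ℝ₊ⁿ and θ₁,…,θₙ > 0 with θ₀ = ∑θ_i > 2, the potential kernel u(x,y) given by the explicit series satisfies u(x,y) ≤ C (∑_i x_i)^{1−θ₀/2} for all x with ∑_i x_i sufficiently large, where C depends only on y and θ. -/

import Mathlib

open Finset

/-- The finite set of tuples `(k₁,…,kₙ)` of nonnegative integers with
`k₁ + ⋯ + kₙ = m`. -/
def multiIdx (n m : ℕ) : Finset (Fin n → ℕ) :=
  (Fintype.piFinset fun _ : Fin n => Finset.range (m + 1)).filter fun k => ∑ i, k i = m

/-- The explicit series for the potential kernel of `n` independent BESQ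
processes. -/
noncomputable def potKernel {n : ℕ} (θ : Fin n → ℝ) (x y : Fin n → ℝ) : ℝ :=
  (1 / 2) * ((∑ i, (x i + y i)) ^ ((1 : ℝ) - (∑ i, θ i) / 2))
    * (∏ i, y i ^ (θ i / 2 - 1)) *
    ∑' m : ℕ,
      Real.Gamma ((∑ i, θ i) / 2 - 1 + 2 * m)
        * ((∑ i, (x i + y i)) ^ (-(2 : ℝ) * m) / m.factorial) *
        ∑ k ∈ multiIdx n m,
          (Nat.multinomial Finset.univ k : ℝ) *
            ∏ i, (x i * y i) ^ (k i) / Real.Gamma (θ i / 2 + k i)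

lemma auxGammaRec {s : ℝ} (hs : 0 < s) : ∀ k : ℕ,
    Real.Gamma (s + 1) * k.factorial ≤ Real.Gamma (s + k + 1) := by
  intro k
  induction k with
  | zero => simp
  | succ j ih =>
      have h1 : s + (j:ℝ) + 1 ≠ 0 := by positivity
      have h2 : Real.Gamma (s + (j+1:ℕ) + 1) = (s + j + 1) * Real.Gamma (s + j + 1) := by
        rw [show (s + ((j:ℕ)+1:ℕ) + 1 : ℝ) = (s + j + 1) + 1 by push_cast; ring,
          Real.Gamma_add_one h1]
      rw [h2]
      have h4 : ((j+1:ℕ).factorial : ℝ) = (j+1) * j.factorial := by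
        rw [Nat.factorial_succ]; push_cast; ring
      calc Real.Gamma (s+1) * ((j+1:ℕ).factorial : ℝ)
          = (j+1) * (Real.Gamma (s+1) * j.factorial) := by rw [h4]; ring
        _ ≤ (s + j + 1) * Real.Gamma (s + j + 1) := by
            apply mul_le_mul (by linarith) ih (by positivity) (by positivity)

lemma auxGammaInv {s : ℝ} (hs : 0 < s) (k : ℕ) :
    (Real.Gamma (s + k))⁻¹ ≤
      max (Real.Gamma s)⁻¹ (Real.Gamma (s+1))⁻¹ * ((k+1) / k.factorial) := by
  have hpos1 : 0 < Real.Gamma (s + 1) := Real.Gamma_pos_of_pos (by linarith)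
  cases k with
  | zero =>
      have h0 : (Real.Gamma (s + (0:ℕ)))⁻¹ = (Real.Gamma s)⁻¹ := by norm_num
      have h2 : (((0:ℕ):ℝ)+1) / ((0:ℕ).factorial : ℝ) = 1 := by norm_num
      rw [h0, h2, mul_one]
      exact le_max_left _ _
  | succ j =>
      have hrec := auxGammaRec hs j
      have hfj : (0:ℝ) < j.factorial := by positivity
      have h1 : (Real.Gamma (s + ((j:ℕ)+1:ℕ)))⁻¹ ≤ (Real.Gamma (s+1) * j.factorial)⁻¹ := by
        rw [show (s + ((j:ℕ)+1:ℕ) : ℝ) = s + j + 1 by push_cast; ring]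
        exact inv_anti₀ (by positivity) hrec
      refine h1.trans ?_
      rw [mul_inv]
      have h2 : (Real.Gamma (s+1))⁻¹ ≤ max (Real.Gamma s)⁻¹ (Real.Gamma (s+1))⁻¹ :=
        le_max_right _ _
      have h3 : ((j.factorial:ℝ))⁻¹ ≤ ((j:ℝ)+1+1) / (((j:ℕ)+1:ℕ).factorial) := by
        rw [inv_eq_one_div, div_le_div_iff₀ hfj (by positivity), Nat.factorial_succ]
        push_cast
        nlinarith [hfj]
      calc (Real.Gamma (s+1))⁻¹ * ((j.factorial:ℝ))⁻¹
          ≤ max (Real.Gamma s)⁻¹ (Real.Gamma (s+1))⁻¹ * (((j:ℝ)+1+1) / (((j:ℕ)+1:ℕ).factorial)) := by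
            apply mul_le_mul h2 h3 (by positivity) (le_trans (by positivity) h2)
        _ = _ := by push_cast; ring_nf


open Finset

lemma auxFactAdd (a : ℕ) : ∀ b : ℕ, (a+b).factorial ≤ a.factorial * (a+b)^b := by
  intro b
  induction b with
  | zero => simp
  | succ c ih =>
      have h1 : (a+(c+1)).factorial = (a+c+1) * (a+c).factorial := by
        rw [show a+(c+1) = (a+c)+1 by ring, Nat.factorial_succ]
      rw [h1]
      calc (a+c+1) * (a+c).factorial ≤ (a+c+1) * (a.factorial * (a+c)^c) :=
            Nat.mul_le_mul_left _ ih
        _ ≤ a.factorial * (a+(c+1))^(c+1) := by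
            rw [show a+(c+1) = (a+c)+1 by ring, pow_succ]
            calc (a+c+1) * (a.factorial * (a+c)^c)
                ≤ (a+c+1) * (a.factorial * (a+c+1)^c) := by
                  exact Nat.mul_le_mul_left _ (Nat.mul_le_mul_left _
                    (Nat.pow_le_pow_left (Nat.le_succ _) _))
              _ = a.factorial * ((a+c+1)^c * (a+c+1)) := by ring

lemma auxCentral (m : ℕ) : (2*m).factorial ≤ 4^m * (m.factorial * m.factorial) := by
  have h1 : (2*m).choose m * m.factorial * (2*m - m).factorial = (2*m).factorial :=
    Nat.choose_mul_factorial_mul_factorial (by omega)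
  have h2 : 2*m - m = m := by omega
  rw [h2] at h1
  have h3 : (2*m).choose m ≤ 4^m :=
    le_trans (Nat.choose_le_choose m (by omega : 2*m ≤ 2*m+1)) (Nat.choose_middle_le_pow m)
  calc (2*m).factorial = (2*m).choose m * m.factorial * m.factorial := h1.symm
    _ ≤ 4^m * m.factorial * m.factorial := by
        exact Nat.mul_le_mul_right _ (Nat.mul_le_mul_right _ h3)
    _ = 4^m * (m.factorial * m.factorial) := by ring

lemma auxLin (p m : ℕ) : 2*m+p ≤ (p+2)^(m+1) := by
  have h1 : m+1 ≤ (p+2)^m := Nat.succ_le_of_lt (Nat.lt_pow_self (by omega : 1 < p+2) : m < (p+2)^m)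
  have h2 : (p+2)*(m+1) ≤ (p+2)*(p+2)^m := Nat.mul_le_mul_left _ h1
  have h3 : (p+2)*(p+2)^m = (p+2)^(m+1) := by rw [pow_succ]; ring
  have h4 : 2*m+p ≤ (p+2)*(m+1) := by nlinarith
  omega

lemma auxPoly (p n m : ℕ) (hp : 1 ≤ p) :
    (2*m+p)^p * (m+1)^(2*n) ≤ ((p+2)^(2*n+p))^(m+1) := by
  have h0 : m+1 ≤ 2*m+p := by omega
  have h1 : (2*m+p)^p * (m+1)^(2*n) ≤ (2*m+p)^p * (2*m+p)^(2*n) :=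
    Nat.mul_le_mul_left _ (Nat.pow_le_pow_left h0 _)
  have h2 : (2*m+p)^p * (2*m+p)^(2*n) = (2*m+p)^(2*n+p) := by
    rw [← pow_add]; ring_nf
  have h3 : (2*m+p)^(2*n+p) ≤ ((p+2)^(m+1))^(2*n+p) :=
    Nat.pow_le_pow_left (auxLin p m) _
  have h4 : ((p+2)^(m+1))^(2*n+p) = ((p+2)^(2*n+p))^(m+1) := by
    rw [← pow_mul, ← pow_mul]; ring_nf
  omega

lemma auxMultinomialLe {n m : ℕ} {k : Fin n → ℕ} (hk : ∑ i, k i = m) :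
    Nat.multinomial Finset.univ k ≤ n^m := by
  have hmem : k ∈ piAntidiag (univ : Finset (Fin n)) m := by
    rw [mem_piAntidiag]; exact ⟨hk, fun i _ => mem_univ i⟩
  have h1 := Finset.sum_pow_eq_sum_piAntidiag (univ : Finset (Fin n)) (fun _ => (1:ℕ)) m
  simp only [prod_const, one_pow, mul_one, sum_const, smul_eq_mul, Nat.cast_id] at h1
  have h2 : Nat.multinomial univ k ≤
      ∑ j ∈ piAntidiag (univ : Finset (Fin n)) m, Nat.multinomial univ j :=
    Finset.single_le_sum (fun j _ => Nat.zero_le _) hmem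
  have h3 : (n : ℕ) ^ m = ∑ j ∈ piAntidiag (univ : Finset (Fin n)) m, Nat.multinomial univ j := by
    simpa using h1
  omega

lemma auxFactProd {n m : ℕ} {k : Fin n → ℕ} (hk : ∑ i, k i = m) :
    m.factorial ≤ n^m * ∏ i, (k i).factorial := by
  have h1 : (∏ i, (k i).factorial) * Nat.multinomial Finset.univ k = m.factorial := by
    rw [Nat.multinomial_spec, hk]
  calc m.factorial = (∏ i, (k i).factorial) * Nat.multinomial Finset.univ k := h1.symm
    _ ≤ (∏ i, (k i).factorial) * n^m := Nat.mul_le_mul_left _ (auxMultinomialLe hk)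
    _ = n^m * ∏ i, (k i).factorial := by ring

lemma auxCardMultiIdx (n m : ℕ) : (multiIdx n m).card ≤ (m+1)^n := by
  calc (multiIdx n m).card ≤ (Fintype.piFinset fun _ : Fin n => Finset.range (m + 1)).card :=
        Finset.card_le_card (Finset.filter_subset _ _)
    _ = (m+1)^n := by
        rw [Fintype.card_piFinset]
        simp [Finset.card_range]

set_option maxHeartbeats 2000000 in
/-- for fixed `y` the potential kernel decays like
`(∑ xᵢ)^{1−θ₀/2}`: there are constants `C > 0` and `M` such that
`u(x,y) ≤ C (∑ xᵢ)^{1−θ₀/2}` whenever `∑ xᵢ ≥ M`. -/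
theorem stmt13 (n : ℕ) (θ : Fin n → ℝ) (hθ : ∀ i, 0 < θ i) (hθ0 : 2 < ∑ i, θ i)
    (y : Fin n → ℝ) (hy : ∀ i, 0 < y i) :
    ∃ C > (0 : ℝ), ∃ M : ℝ, ∀ x : Fin n → ℝ, (∀ i, 0 ≤ x i) →
      M ≤ ∑ i, x i →
      potKernel θ x y ≤ C * (∑ i, x i) ^ ((1 : ℝ) - (∑ i, θ i) / 2) := by
  have hn : 0 < n := by
    rcases Nat.eq_zero_or_pos n with h | h
    · subst h; simp at hθ0; linarith
    · exact h
  set θ0 := ∑ i, θ i with hθ0def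
  have ha0 : 0 < θ0 / 2 - 1 := by linarith
  set a0 := θ0 / 2 - 1 with ha0def
  set Y := ∑ i, y i with hYdef
  have hYpos : 0 < Y := Finset.sum_pos (fun i _ => hy i) ⟨⟨0, hn⟩, mem_univ _⟩
  set d : Fin n → ℝ := fun i => max (Real.Gamma (θ i / 2))⁻¹ (Real.Gamma (θ i / 2 + 1))⁻¹
    with hddef
  have hdpos : ∀ i, 0 < d i := fun i =>
    lt_of_lt_of_le (inv_pos.mpr (Real.Gamma_pos_of_pos (by linarith [hθ i])))
      (le_max_left _ _)
  set D := ∏ i, d i with hDdef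
  have hDpos : 0 < D := Finset.prod_pos fun i _ => hdpos i
  set p := ⌈a0⌉₊ + 1 with hpdef
  have hp1 : 1 ≤ p := by omega
  have hap : a0 ≤ p := by
    have := Nat.le_ceil a0
    push_cast [hpdef]
    push_cast at this
    linarith
  set E : ℕ := (p+2)^(2*n+p) with hEdef
  have hE1 : (1:ℝ) ≤ (E:ℕ) := by exact_mod_cast Nat.one_le_pow _ _ (by omega)
  set A := D * E * (Real.Gamma a0 + 1) with hAdef
  have hGa0 : 0 < Real.Gamma a0 := Real.Gamma_pos_of_pos ha0
  have hApos : 0 < A := by positivity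
  set P := ∏ i, y i ^ (θ i / 2 - 1) with hPdef
  have hPpos : 0 < P := Finset.prod_pos fun i _ => Real.rpow_pos_of_pos (hy i) _
  refine ⟨P * A, by positivity, max (8 * E * n^2 * Y) 1, ?_⟩
  intro x hx hM
  set S := ∑ i, (x i + y i) with hSdef
  have hSx : ∑ i, x i ≤ S := Finset.sum_le_sum fun i _ => le_add_of_nonneg_right (hy i).le
  have hxpos : 0 < ∑ i, x i := lt_of_lt_of_le (by positivity) ((le_max_right _ _).trans hM)
  have hSpos : 0 < S := lt_of_lt_of_le hxpos hSx
  have hSM : 8 * E * n^2 * Y ≤ S := ((le_max_left _ _).trans hM).trans hSx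
  have hxiS : ∀ i, x i ≤ S := fun i =>
    le_trans (Finset.single_le_sum (fun j _ => hx j) (mem_univ i)) hSx
  have hyiY : ∀ i, y i ≤ Y := fun i =>
    Finset.single_le_sum (fun j _ => (hy j).le) (mem_univ i)
  set r : ℝ := (E:ℝ) * (4 * n^2 * Y) / S with hrdef
  have hr0 : 0 ≤ r := by
    apply div_nonneg _ hSpos.le
    exact mul_nonneg (Nat.cast_nonneg _) (by positivity)
  have hr : r ≤ 1/2 := by
    rw [hrdef, div_le_iff₀ hSpos]
    have hEY : 0 < (E:ℝ) * (4 * n^2 * Y) := by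
      have : (0:ℝ) < E := by linarith
      have hn' : (0:ℝ) < n := by exact_mod_cast hn
      positivity
    nlinarith [hSM]
  -- the series terms
  set f : ℕ → ℝ := fun m =>
    Real.Gamma (θ0 / 2 - 1 + 2 * m)
      * (S ^ (-(2 : ℝ) * m) / m.factorial) *
      ∑ k ∈ multiIdx n m,
        (Nat.multinomial Finset.univ k : ℝ) *
          ∏ i, (x i * y i) ^ (k i) / Real.Gamma (θ i / 2 + k i) with hfdef
  have hfnonneg : ∀ m, 0 ≤ f m := by
    intro m
    have hm : (0:ℝ) ≤ m := Nat.cast_nonneg m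
    apply mul_nonneg
    · apply mul_nonneg
      · exact (Real.Gamma_pos_of_pos (by simp only [ha0def] at ha0; linarith)).le
      · positivity
    · apply Finset.sum_nonneg
      intro k _
      apply mul_nonneg (Nat.cast_nonneg _)
      apply Finset.prod_nonneg
      intro i _
      apply div_nonneg (pow_nonneg (mul_nonneg (hx i) (hy i).le) _)
      exact (Real.Gamma_pos_of_pos
        (add_pos_of_pos_of_nonneg (by linarith [hθ i]) (Nat.cast_nonneg _))).le
  have key : ∀ m : ℕ, f m ≤ A * (1/2)^m := by
    intro m
    simp only [hfdef]
    have hm0 : (0:ℝ) ≤ m := Nat.cast_nonneg m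
    have hmf : (0:ℝ) < m.factorial := by positivity
    have hSY : (0:ℝ) ≤ S * Y := by positivity
    set RHSk : ℝ := (n:ℝ)^m * ((S*Y)^m * (D * (((m:ℝ)+1)^n * ((n:ℝ)^m / m.factorial))))
      with hRHSk
    have hRHSk0 : 0 ≤ RHSk := by positivity
    -- per-k bound
    have hk_bound : ∀ k ∈ multiIdx n m,
        (Nat.multinomial Finset.univ k : ℝ) *
            ∏ i, (x i * y i) ^ (k i) / Real.Gamma (θ i / 2 + k i) ≤ RHSk := by
      intro k hk
      have hksum : ∑ i, k i = m := (Finset.mem_filter.mp hk).2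
      have hki : ∀ i, k i ≤ m := fun i => by
        rw [← hksum]
        exact Finset.single_le_sum (f := fun i => k i) (fun j _ => Nat.zero_le _) (mem_univ i)
      have hΓpos : ∀ i, 0 < Real.Gamma (θ i / 2 + k i) := fun i =>
        Real.Gamma_pos_of_pos (add_pos_of_pos_of_nonneg (by linarith [hθ i]) (Nat.cast_nonneg _))
      have hprod1 : ∏ i, (x i * y i) ^ (k i) / Real.Gamma (θ i / 2 + k i)
          ≤ ∏ i, (S*Y) ^ (k i) * (d i * (((k i : ℝ)+1) / (k i).factorial)) := by
        apply Finset.prod_le_prod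
        · intro i _
          exact div_nonneg (pow_nonneg (mul_nonneg (hx i) (hy i).le) _) (hΓpos i).le
        · intro i _
          rw [div_eq_mul_inv]
          apply mul_le_mul
          · exact pow_le_pow_left₀ (mul_nonneg (hx i) (hy i).le)
              (mul_le_mul (hxiS i) (hyiY i) (hy i).le hSpos.le) _
          · have h := auxGammaInv (s := θ i / 2) (by linarith [hθ i]) (k i)
            simp only [hddef]
            exact h
          · exact inv_nonneg.mpr (hΓpos i).le
          · positivity
      have hprod2 : ∏ i, (S*Y) ^ (k i) * (d i * (((k i : ℝ)+1) / (k i).factorial))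
          = (S*Y)^m * (D * ∏ i, (((k i : ℝ)+1) / (k i).factorial)) := by
        rw [Finset.prod_mul_distrib, Finset.prod_mul_distrib,
          Finset.prod_pow_eq_pow_sum, hksum, hDdef]
      have hprod3 : ∏ i, (((k i : ℝ)+1) / (k i).factorial)
          ≤ ((m:ℝ)+1)^n * ((n:ℝ)^m / m.factorial) := by
        rw [Finset.prod_div_distrib]
        have hnum : ∏ i, ((k i : ℝ)+1) ≤ ((m:ℝ)+1)^n := by
          calc ∏ i, ((k i : ℝ)+1) ≤ ∏ _i : Fin n, ((m:ℝ)+1) :=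
                Finset.prod_le_prod (fun i _ => by positivity)
                  (fun i _ => add_le_add_left (by exact_mod_cast hki i) 1)
            _ = ((m:ℝ)+1)^n := by
                rw [Finset.prod_const, Finset.card_univ, Fintype.card_fin]
        have hdenpos : (0:ℝ) < ∏ i, ((k i).factorial : ℝ) := by positivity
        have hden : ((m.factorial:ℝ)/(n:ℝ)^m) ≤ ∏ i, ((k i).factorial : ℝ) := by
          rw [div_le_iff₀ (by positivity)]
          calc (m.factorial:ℝ) ≤ ((n^m * ∏ i, (k i).factorial : ℕ) : ℝ) := by
                exact_mod_cast auxFactProd hksum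
            _ = (∏ i, ((k i).factorial : ℝ)) * (n:ℝ)^m := by push_cast; ring
        have h2 : (∏ i, ((k i).factorial : ℝ))⁻¹ ≤ (n:ℝ)^m / m.factorial := by
          have h3 : (0:ℝ) < (m.factorial:ℝ)/(n:ℝ)^m := by
            apply div_pos hmf
            have : (0:ℝ) < n := by exact_mod_cast hn
            positivity
          calc (∏ i, ((k i).factorial : ℝ))⁻¹ ≤ ((m.factorial:ℝ)/(n:ℝ)^m)⁻¹ :=
                inv_anti₀ h3 hden
            _ = (n:ℝ)^m / m.factorial := by rw [inv_div]
        calc (∏ i, ((k i : ℝ)+1)) / (∏ i, ((k i).factorial : ℝ))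
            = (∏ i, ((k i : ℝ)+1)) * (∏ i, ((k i).factorial : ℝ))⁻¹ := div_eq_mul_inv _ _
          _ ≤ ((m:ℝ)+1)^n * ((n:ℝ)^m / m.factorial) :=
              mul_le_mul hnum h2 (inv_nonneg.mpr hdenpos.le) (by positivity)
      have hmult : (Nat.multinomial Finset.univ k : ℝ) ≤ (n:ℝ)^m := by
        exact_mod_cast auxMultinomialLe hksum
      calc (Nat.multinomial Finset.univ k : ℝ) *
            ∏ i, (x i * y i) ^ (k i) / Real.Gamma (θ i / 2 + k i)
          ≤ (n:ℝ)^m * ((S*Y)^m * (D * (((m:ℝ)+1)^n * ((n:ℝ)^m / m.factorial)))) := by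
            apply mul_le_mul hmult
            · refine (hprod1.trans_eq hprod2).trans ?_
              exact mul_le_mul_of_nonneg_left
                (mul_le_mul_of_nonneg_left hprod3 hDpos.le) (by positivity)
            · apply Finset.prod_nonneg
              intro i _
              exact div_nonneg (pow_nonneg (mul_nonneg (hx i) (hy i).le) _) (hΓpos i).le
            · positivity
        _ = RHSk := rfl
    -- sum over k
    have hSig : (∑ k ∈ multiIdx n m, (Nat.multinomial Finset.univ k : ℝ) *
          ∏ i, (x i * y i) ^ (k i) / Real.Gamma (θ i / 2 + k i))
        ≤ ((m:ℝ)+1)^n * RHSk := by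
      calc (∑ k ∈ multiIdx n m, (Nat.multinomial Finset.univ k : ℝ) *
            ∏ i, (x i * y i) ^ (k i) / Real.Gamma (θ i / 2 + k i))
          ≤ (multiIdx n m).card • RHSk := Finset.sum_le_card_nsmul _ _ _ hk_bound
        _ = ((multiIdx n m).card : ℝ) * RHSk := nsmul_eq_mul _ _
        _ ≤ ((m:ℝ)+1)^n * RHSk := by
            apply mul_le_mul_of_nonneg_right _ hRHSk0
            calc ((multiIdx n m).card : ℝ) ≤ (((m+1)^n : ℕ) : ℝ) := by
                  exact_mod_cast auxCardMultiIdx n m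
              _ = ((m:ℝ)+1)^n := by push_cast; ring
    -- Gamma bound
    have hΓsum0 : 0 < θ0 / 2 - 1 + 2 * (m:ℝ) := by
      simp only [ha0def] at ha0; linarith
    have hPbase : (1:ℝ) ≤ ((2*m+p:ℕ):ℝ) := by exact_mod_cast (by omega : 1 ≤ 2*m+p)
    have hPp1 : (1:ℝ) ≤ ((2*m+p:ℕ):ℝ)^p := by
      calc (1:ℝ) = 1^p := (one_pow p).symm
        _ ≤ ((2*m+p:ℕ):ℝ)^p := pow_le_pow_left₀ zero_le_one hPbase p
    have hG : Real.Gamma (θ0 / 2 - 1 + 2 * m) ≤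
        (Real.Gamma a0 + 1) *
          ((4:ℝ)^m * ((m.factorial:ℝ) * (m.factorial:ℝ)) * ((2*m+p:ℕ):ℝ)^p) := by
      have harg : θ0 / 2 - 1 + 2 * (m:ℝ) = a0 + 2*m := by rw [ha0def]
      rw [harg]
      rcases Nat.eq_zero_or_pos m with hm | hm
      · subst hm
        norm_num at hPp1 ⊢
        nlinarith [hPp1, hGa0]
      · have hm1 : (1:ℝ) ≤ m := by exact_mod_cast hm
        have hmem1 : a0 + 2*(m:ℝ) ∈ Set.Ici (2:ℝ) := Set.mem_Ici.mpr (by linarith)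
        have hmem2 : ((2*m+p:ℕ):ℝ) ∈ Set.Ici (2:ℝ) := Set.mem_Ici.mpr (by
          have : (3:ℕ) ≤ 2*m+p := by omega
          exact_mod_cast le_trans (by norm_num : (2:ℕ) ≤ 3) this)
        have hle : a0 + 2*(m:ℝ) ≤ ((2*m+p:ℕ):ℝ) := by
          push_cast
          linarith [hap, Nat.le_ceil a0]
        have hmono := Real.Gamma_strictMonoOn_Ici.monotoneOn hmem1 hmem2 hle
        have hΓq : Real.Gamma ((2*m+p:ℕ):ℝ) = ((2*m+(p-1)).factorial : ℝ) := by
          have hq : (2*m+p:ℕ) = (2*m+(p-1)) + 1 := by omega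
          rw [hq, Nat.cast_succ]
          exact Real.Gamma_nat_eq_factorial _
        have hfact : (2*m+(p-1)).factorial ≤ (2*m).factorial * (2*m+p)^p := by
          calc (2*m+(p-1)).factorial ≤ (2*m).factorial * (2*m+(p-1))^(p-1) :=
                auxFactAdd (2*m) (p-1)
            _ ≤ (2*m).factorial * (2*m+p)^p := Nat.mul_le_mul_left _
                (le_trans (Nat.pow_le_pow_left (by omega) _)
                  (Nat.pow_le_pow_right (by omega) (by omega)))
        have hcen : (2*m).factorial * (2*m+p)^p ≤ 4^m * (m.factorial * m.factorial) * (2*m+p)^p :=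
          Nat.mul_le_mul_right _ (auxCentral m)
        calc Real.Gamma (a0 + 2*(m:ℝ)) ≤ Real.Gamma ((2*m+p:ℕ):ℝ) := hmono
          _ = ((2*m+(p-1)).factorial : ℝ) := hΓq
          _ ≤ ((4^m * (m.factorial * m.factorial) * (2*m+p)^p : ℕ) : ℝ) := by
              exact_mod_cast le_trans hfact hcen
          _ = (4:ℝ)^m * ((m.factorial:ℝ)*(m.factorial:ℝ)) * ((2*m+p:ℕ):ℝ)^p := by
              push_cast; ring
          _ ≤ (Real.Gamma a0 + 1) *
              ((4:ℝ)^m * ((m.factorial:ℝ) * (m.factorial:ℝ)) * ((2*m+p:ℕ):ℝ)^p) :=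
            le_mul_of_one_le_left (by positivity) (by linarith)
    -- final combination
    have hSig0 : 0 ≤ ∑ k ∈ multiIdx n m, (Nat.multinomial Finset.univ k : ℝ) *
          ∏ i, (x i * y i) ^ (k i) / Real.Gamma (θ i / 2 + k i) := by
      apply Finset.sum_nonneg; intro k _
      apply mul_nonneg (Nat.cast_nonneg _)
      apply Finset.prod_nonneg; intro i _
      exact div_nonneg (pow_nonneg (mul_nonneg (hx i) (hy i).le) _)
        (Real.Gamma_pos_of_pos
          (add_pos_of_pos_of_nonneg (by linarith [hθ i]) (Nat.cast_nonneg _))).le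
    have hrpow : S ^ (-(2:ℝ) * (m:ℝ)) = (S^(2*m))⁻¹ := by
      rw [show (-(2:ℝ) * (m:ℝ)) = -((2*m:ℕ):ℝ) by push_cast; ring,
        Real.rpow_neg hSpos.le, Real.rpow_natCast]
    have hΓB0 : (0:ℝ) ≤ (Real.Gamma a0 + 1) *
        ((4:ℝ)^m * ((m.factorial:ℝ)*(m.factorial:ℝ)) * ((2*m+p:ℕ):ℝ)^p) := by positivity
    have hmid0 : (0:ℝ) ≤ S ^ (-(2:ℝ) * (m:ℝ)) / m.factorial :=
      div_nonneg (Real.rpow_nonneg hSpos.le _) hmf.le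
    have hq0 : (0:ℝ) ≤ 4*(n:ℝ)^2*Y/S :=
      div_nonneg (mul_nonneg (by positivity) hYpos.le) hSpos.le
    calc Real.Gamma (θ0 / 2 - 1 + 2 * m) * (S ^ (-(2:ℝ) * m) / m.factorial) *
          ∑ k ∈ multiIdx n m, (Nat.multinomial Finset.univ k : ℝ) *
            ∏ i, (x i * y i) ^ (k i) / Real.Gamma (θ i / 2 + k i)
        ≤ ((Real.Gamma a0 + 1) *
            ((4:ℝ)^m * ((m.factorial:ℝ)*(m.factorial:ℝ)) * ((2*m+p:ℕ):ℝ)^p)) *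
            (S ^ (-(2:ℝ) * m) / m.factorial) * (((m:ℝ)+1)^n * RHSk) := by
          apply mul_le_mul (mul_le_mul hG le_rfl hmid0 hΓB0) hSig hSig0
            (mul_nonneg hΓB0 hmid0)
      _ = (Real.Gamma a0 + 1) * D * (((2*m+p:ℕ):ℝ)^p * ((m:ℝ)+1)^(2*n)) *
            (4*(n:ℝ)^2*Y/S)^m := by
          rw [hrpow, hRHSk]
          have h1 : (S:ℝ) ≠ 0 := hSpos.ne'
          have h2 : (m.factorial:ℝ) ≠ 0 := hmf.ne'
          field_simp
          have hS2 : S^(m*2) * S⁻¹^m = S^m := by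
            rw [inv_pow, pow_mul, sq, mul_assoc, mul_inv_cancel₀ (pow_ne_zero _ h1), mul_one]
          linear_combination (-((n:ℝ)^(m*2) * Y^m * (1+(m:ℝ))^(n*2) * 4^m)) * hS2
      _ ≤ (Real.Gamma a0 + 1) * D * ((E:ℝ)^(m+1)) * (4*(n:ℝ)^2*Y/S)^m := by
          apply mul_le_mul_of_nonneg_right _ (pow_nonneg hq0 m)
          apply mul_le_mul_of_nonneg_left _ (mul_nonneg (by linarith) hDpos.le)
          calc ((2*m+p:ℕ):ℝ)^p * ((m:ℝ)+1)^(2*n)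
              = (((2*m+p)^p * (m+1)^(2*n) : ℕ) : ℝ) := by push_cast; ring
            _ ≤ ((E^(m+1) : ℕ) : ℝ) := by exact_mod_cast auxPoly p n m hp1
            _ = (E:ℝ)^(m+1) := by push_cast; ring
      _ = A * ((E:ℝ) * (4 * (n:ℝ)^2 * Y) / S)^m := by rw [hAdef]; ring
      _ ≤ A * (1/2)^m := by
          rw [← hrdef]
          exact mul_le_mul_of_nonneg_left (pow_le_pow_left₀ hr0 hr m) hApos.le
  have htsum : ∑' m, f m ≤ 2 * A := by
    apply Real.tsum_le_of_sum_range_le hfnonneg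
    intro N
    calc ∑ i ∈ Finset.range N, f i ≤ ∑ i ∈ Finset.range N, A * (1/2)^i :=
          Finset.sum_le_sum fun i _ => key i
      _ = A * ∑ i ∈ Finset.range N, (1/2:ℝ)^i := by rw [Finset.mul_sum]
      _ ≤ A * 2 := by
          apply mul_le_mul_of_nonneg_left _ hApos.le
          rw [geom_sum_eq (by norm_num : (1/2:ℝ) ≠ 1)]
          have h0 : (0:ℝ) ≤ (1/2:ℝ)^N := by positivity
          have h2 : ((1/2:ℝ)^N - 1)/((1/2:ℝ) - 1) = 2 - 2*(1/2:ℝ)^N := by ring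
          rw [h2]; linarith
      _ = 2 * A := by ring
  have hpk : potKernel θ x y = (1/2) * S ^ ((1:ℝ) - θ0/2) * P * ∑' m, f m := rfl
  have hgoal : potKernel θ x y ≤ (1/2) * S ^ ((1:ℝ) - θ0/2) * P * (2 * A) := by
    rw [hpk]
    apply mul_le_mul_of_nonneg_left htsum
    have hS' : 0 ≤ S ^ ((1:ℝ) - θ0/2) := (Real.rpow_pos_of_pos hSpos _).le
    have := hPpos.le
    positivity
  refine hgoal.trans ?_
  have h1 : (1/2) * S ^ ((1:ℝ) - θ0/2) * P * (2 * A) = (P * A) * S ^ ((1:ℝ) - θ0/2) := by ring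
  rw [h1]
  apply mul_le_mul_of_nonneg_left _ (mul_pos hPpos hApos).le
  exact Real.rpow_le_rpow_of_nonpos hxpos hSx (by linarith)
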